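/- Let Γ be a free group of finite rank, p a prime, and k ≥ 1, and let π : Γ/Γ^S_{k+2} → Γ/Γ^S_{k+1} be the canonical projection. For every automorphism φ of Γ/Γ^S_{k+1} there exists an automorphism Φ of Γ/Γ^S_{k+2} such that π ∘ Φ = φ ∘ π. -/

import Mathlib

open scoped commutatorElement

def stallings (p : ℕ) (G : Type*) [Group G] : ℕ → Subgroup G
  | 0 => ⊤
  | 1 => ⊤
  | (k + 2) =>
    Subgroup.closure
      {x : G | (∃ g : G, ∃ y ∈ stallings p G (k + 1), x = ⁅g, y⁆) ∨
        ∃ y ∈ stallings p G (k + 1), x = y ^ p}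

theorem closure_normal_of_conj {G : Type*} [Group G] {s : Set G}
    (h : ∀ g : G, ∀ x ∈ s, g * x * g⁻¹ ∈ s) : (Subgroup.closure s).Normal := by
  constructor
  intro n hn g
  have key : Subgroup.closure s ≤
      Subgroup.comap (MulAut.conj g).toMonoidHom (Subgroup.closure s) := by
    rw [Subgroup.closure_le]
    intro x hx
    have : (MulAut.conj g).toMonoidHom x ∈ Subgroup.closure s :=
      Subgroup.subset_closure (by simpa [MulAut.conj_apply] using h g x hx)
    exact this
  have := key hn
  rw [Subgroup.mem_comap] at this
  simpa [MulAut.conj_apply] using this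

instance stallings_normal (p : ℕ) (G : Type*) [Group G] (k : ℕ) :
    (stallings p G k).Normal := by
  induction k with
  | zero => simp only [stallings]; infer_instance
  | succ n ih =>
    cases n with
    | zero => simp only [stallings]; infer_instance
    | succ m =>
      simp only [stallings]
      apply closure_normal_of_conj
      rintro g x (⟨a, y, hy, rfl⟩ | ⟨y, hy, rfl⟩)
      · refine Or.inl ⟨g * a * g⁻¹, g * y * g⁻¹, ih.conj_mem y hy g, ?_⟩
        simp only [commutatorElement_def]
        group
      · refine Or.inr ⟨g * y * g⁻¹, ih.conj_mem y hy g, ?_⟩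
        rw [conj_pow]

theorem stallings_succ_le (p : ℕ) (G : Type*) [Group G] :
    ∀ k, stallings p G (k + 1) ≤ stallings p G k := by
  intro k
  induction k with
  | zero => exact le_top
  | succ n ih =>
    cases n with
    | zero => exact le_top
    | succ m =>
      show stallings p G (m + 3) ≤ stallings p G (m + 2)
      have h3 : stallings p G (m + 3) = Subgroup.closure
          {x : G | (∃ g : G, ∃ y ∈ stallings p G (m + 2), x = ⁅g, y⁆) ∨
            ∃ y ∈ stallings p G (m + 2), x = y ^ p} := rfl
      rw [h3, Subgroup.closure_le]
      rintro x (⟨a, y, hy, rfl⟩ | ⟨y, hy, rfl⟩)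
      · show ⁅a, y⁆ ∈ stallings p G (m + 2)
        simp only [stallings]
        exact Subgroup.subset_closure (Or.inl ⟨a, y, ih hy, rfl⟩)
      · show y ^ p ∈ stallings p G (m + 2)
        simp only [stallings]
        exact Subgroup.subset_closure (Or.inr ⟨y, ih hy, rfl⟩)

theorem stallings_antitone (p : ℕ) (G : Type*) [Group G] :
    Antitone (stallings p G) :=
  antitone_nat_of_succ_le (stallings_succ_le p G)

/-- The canonical projection `G/G^S_{k'} → G/G^S_k` for `k ≤ k'`. -/
def stallingsProj (p : ℕ) (G : Type*) [Group G] (k k' : ℕ) (h : k ≤ k') :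
    (G ⧸ stallings p G k') →* (G ⧸ stallings p G k) :=
  QuotientGroup.map _ _ (MonoidHom.id G) (fun _ hx => stallings_antitone p G h hx)


theorem stallings_map_le {G H : Type*} [Group G] [Group H] (p : ℕ) (f : G →* H) :
    ∀ k, (stallings p G k).map f ≤ stallings p H k := by
  intro k
  induction k with
  | zero => exact le_top
  | succ n ih =>
    cases n with
    | zero => exact le_top
    | succ m =>
      show (stallings p G (m + 2)).map f ≤ stallings p H (m + 2)
      have h2 : stallings p G (m + 2) = Subgroup.closure
          {x : G | (∃ g : G, ∃ y ∈ stallings p G (m + 1), x = ⁅g, y⁆) ∨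
            ∃ y ∈ stallings p G (m + 1), x = y ^ p} := rfl
      rw [h2, MonoidHom.map_closure, Subgroup.closure_le]
      rintro x ⟨x', (⟨a, y, hy, rfl⟩ | ⟨y, hy, rfl⟩), rfl⟩
      · show f ⁅a, y⁆ ∈ stallings p H (m + 2)
        rw [map_commutatorElement]
        exact Subgroup.subset_closure
          (Or.inl ⟨f a, f y, ih ⟨y, hy, rfl⟩, rfl⟩)
      · show f (y ^ p) ∈ stallings p H (m + 2)
        rw [map_pow]
        exact Subgroup.subset_closure (Or.inr ⟨f y, ih ⟨y, hy, rfl⟩, rfl⟩)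

theorem stallings_map_surj {G H : Type*} [Group G] [Group H] (p : ℕ) {f : G →* H}
    (hf : Function.Surjective f) :
    ∀ k, (stallings p G k).map f = stallings p H k := by
  intro k
  induction k with
  | zero => exact Subgroup.map_top_of_surjective f hf
  | succ n ih =>
    cases n with
    | zero => exact Subgroup.map_top_of_surjective f hf
    | succ m =>
      refine le_antisymm (stallings_map_le p f _) ?_
      show stallings p H (m + 2) ≤ (stallings p G (m + 2)).map f
      have h2 : stallings p H (m + 2) = Subgroup.closure
          {x : H | (∃ g : H, ∃ y ∈ stallings p H (m + 1), x = ⁅g, y⁆) ∨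
            ∃ y ∈ stallings p H (m + 1), x = y ^ p} := rfl
      rw [h2, Subgroup.closure_le]
      rintro x (⟨a, y, hy, rfl⟩ | ⟨y, hy, rfl⟩)
      · rw [← ih] at hy
        obtain ⟨y', hy', rfl⟩ := hy
        obtain ⟨a', rfl⟩ := hf a
        refine ⟨⁅a', y'⁆, ?_, map_commutatorElement f a' y'⟩
        exact Subgroup.subset_closure (Or.inl ⟨a', y', hy', rfl⟩)
      · rw [← ih] at hy
        obtain ⟨y', hy', rfl⟩ := hy
        refine ⟨y' ^ p, ?_, map_pow f y' p⟩
        exact Subgroup.subset_closure (Or.inr ⟨y', hy', rfl⟩)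

theorem stallings_quotient_eq_bot (p : ℕ) (G : Type*) [Group G] (k : ℕ) :
    stallings p (G ⧸ stallings p G k) k = ⊥ := by
  rw [← stallings_map_surj p (QuotientGroup.mk'_surjective (stallings p G k)) k,
    Subgroup.map_eq_bot_iff, QuotientGroup.ker_mk']

theorem commutator_mem_stallings {G : Type*} [Group G] (p k : ℕ) (g : G) {y : G}
    (hy : y ∈ stallings p G (k + 1)) : ⁅g, y⁆ ∈ stallings p G (k + 2) :=
  Subgroup.subset_closure (Or.inl ⟨g, y, hy, rfl⟩)

theorem pow_mem_stallings {G : Type*} [Group G] (p k : ℕ) {y : G}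
    (hy : y ∈ stallings p G (k + 1)) : y ^ p ∈ stallings p G (k + 2) :=
  Subgroup.subset_closure (Or.inr ⟨y, hy, rfl⟩)

/-- In `G ⧸ stallings p G (k+2)`, elements of `stallings _ _ (k+1)` are central. -/
theorem stallings_central (p : ℕ) (G : Type*) [Group G] (k : ℕ) {t : G ⧸ stallings p G (k + 2)}
    (ht : t ∈ stallings p (G ⧸ stallings p G (k + 2)) (k + 1)) :
    ∀ a, t * a = a * t := by
  intro a
  have h : ⁅a, t⁆ ∈ stallings p (G ⧸ stallings p G (k + 2)) (k + 2) :=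
    commutator_mem_stallings p k a ht
  rw [stallings_quotient_eq_bot, Subgroup.mem_bot,
    commutatorElement_eq_one_iff_mul_comm] at h
  exact h.symm

/-- In `G ⧸ stallings p G (k+2)`, elements of `stallings _ _ (k+1)` have `t ^ p = 1`. -/
theorem stallings_pow_eq_one (p : ℕ) (G : Type*) [Group G] (k : ℕ)
    {t : G ⧸ stallings p G (k + 2)}
    (ht : t ∈ stallings p (G ⧸ stallings p G (k + 2)) (k + 1)) : t ^ p = 1 := by
  have h : t ^ p ∈ stallings p (G ⧸ stallings p G (k + 2)) (k + 2) :=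
    pow_mem_stallings p k ht
  rwa [stallings_quotient_eq_bot, Subgroup.mem_bot] at h

theorem stallings_quotient_finite (p : ℕ) (hp : p ≠ 0) (G : Type*) [Group G] [Group.FG G] :
    ∀ k, Finite (G ⧸ stallings p G k) := by
  intro k
  induction k with
  | zero =>
    have h : stallings p G 0 = ⊤ := rfl
    rw [h]
    have := QuotientGroup.subsingleton_quotient_top (G := G)
    exact Finite.of_subsingleton
  | succ n ih =>
    cases n with
    | zero =>
      have h : stallings p G 1 = ⊤ := rfl
      rw [h]
      have := QuotientGroup.subsingleton_quotient_top (G := G)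
      exact Finite.of_subsingleton
    | succ m =>
      haveI : Finite (G ⧸ stallings p G (m + 1)) := ih
      set Q : Type _ := G ⧸ stallings p G (m + 2) with hQ
      set N : Subgroup Q := stallings p Q (m + 1) with hN
      have hmap : (stallings p G (m + 1)).map (QuotientGroup.mk' (stallings p G (m + 2))) = N :=
        stallings_map_surj p (QuotientGroup.mk'_surjective _) (m + 1)
      -- the quotient Q ⧸ N is finite
      haveI hQN : Finite (Q ⧸ N) := by
        rw [← hmap]
        exact Finite.of_equiv _
          (QuotientGroup.quotientQuotientEquivQuotient (stallings p G (m + 2))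
            (stallings p G (m + 1)) (stallings_succ_le p G (m + 1))).symm.toEquiv
      -- N is finite
      haveI hFI : (stallings p G (m + 1)).FiniteIndex := ⟨Subgroup.index_ne_zero_of_finite⟩
      haveI hfg1 : Group.FG (stallings p G (m + 1)) := Subgroup.fg_of_index_ne_zero _
      haveI hfgN : Group.FG N := by
        rw [← hmap]
        exact Group.fg_of_surjective
          (MonoidHom.subgroupMap_surjective (QuotientGroup.mk' (stallings p G (m + 2)))
            (stallings p G (m + 1)))
      haveI hcomm : IsMulCommutative N := by
        constructor
        constructor
        intro a b
        ext
        exact (stallings_central p G m b.2 a).symm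
      have htor : Monoid.IsTorsion N := by
        intro x
        refine isOfFinOrder_iff_pow_eq_one.mpr ⟨p, Nat.pos_of_ne_zero hp, ?_⟩
        ext
        push_cast
        exact stallings_pow_eq_one p G m x.2
      haveI hNfin : Finite N := by
        open scoped IsMulCommutative in exact CommGroup.finite_of_fg_torsion _ htor
      exact Finite.of_equiv _ (Subgroup.groupEquivQuotientProdSubgroup (s := N)).symm

theorem central_commutator_eq {G : Type*} [Group G] {t u : G}
    (ht : ∀ a, t * a = a * t) (hu : ∀ a, u * a = a * u) (x z : G) :
    ⁅x * t, z * u⁆ = ⁅x, z⁆ := by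
  have hA : ∀ c : G, t * c * t⁻¹ = c := fun c => by
    rw [ht c, mul_assoc, mul_inv_cancel, mul_one]
  have hB : ∀ c : G, u * c * u⁻¹ = c := fun c => by
    rw [hu c, mul_assoc, mul_inv_cancel, mul_one]
  calc ⁅x * t, z * u⁆
      = x * (t * (z * u) * t⁻¹) * x⁻¹ * (z * u)⁻¹ := by
        rw [commutatorElement_def]; group
    _ = x * (z * u) * x⁻¹ * (z * u)⁻¹ := by rw [hA]
    _ = x * z * (u * x⁻¹ * u⁻¹) * z⁻¹ := by group
    _ = x * z * x⁻¹ * z⁻¹ := by rw [hB]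
    _ = ⁅x, z⁆ := (commutatorElement_def x z).symm

instance freeGroup_fg (n : ℕ) : Group.FG (FreeGroup (Fin n)) := by
  rw [Group.fg_iff]
  exact ⟨Set.range FreeGroup.of, FreeGroup.closure_range_of _, Set.finite_range _⟩

theorem aut_lifts_along_stallings_proj (n p : ℕ) (hp : p.Prime) (k : ℕ) (hk : 1 ≤ k)
    (φ : MulAut (FreeGroup (Fin n) ⧸ stallings p (FreeGroup (Fin n)) (k + 1))) :
    ∃ Φ : MulAut (FreeGroup (Fin n) ⧸ stallings p (FreeGroup (Fin n)) (k + 2)),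
      ∀ x, stallingsProj p (FreeGroup (Fin n)) (k + 1) (k + 2) (Nat.le_succ _) (Φ x) =
        φ (stallingsProj p (FreeGroup (Fin n)) (k + 1) (k + 2) (Nat.le_succ _) x) := by
  classical
  set G := FreeGroup (Fin n) with hG
  set π : (G ⧸ stallings p G (k + 2)) →* (G ⧸ stallings p G (k + 1)) :=
    stallingsProj p G (k + 1) (k + 2) (Nat.le_succ _) with hπ
  have hπmk : ∀ g : G, π (QuotientGroup.mk g) = QuotientGroup.mk g := fun g => rfl
  have hπsurj : Function.Surjective π := by
    intro q
    obtain ⟨g, rfl⟩ := QuotientGroup.mk_surjective q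
    exact ⟨QuotientGroup.mk g, hπmk g⟩
  -- choose lifts of the images of the generators
  have hπsurj2 := hπsurj
  choose lift hlift using hπsurj2
  set ψ : G →* (G ⧸ stallings p G (k + 2)) :=
    FreeGroup.lift (fun i => lift (φ (QuotientGroup.mk (FreeGroup.of i)))) with hψ
  have hcomm : ∀ g : G, π (ψ g) = φ (QuotientGroup.mk g) := by
    have : π.comp ψ = (φ.toMonoidHom).comp (QuotientGroup.mk' (stallings p G (k + 1))) := by
      apply FreeGroup.ext_hom
      intro a
      simp only [MonoidHom.comp_apply, hψ, FreeGroup.lift_apply_of]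
      rw [hlift]
      rfl
    intro g
    have := congrArg (fun f => f g) this
    simpa using this
  -- ψ kills stallings p G (k+2)
  have hker : ∀ x ∈ stallings p G (k + 2), ψ x = 1 := by
    intro x hx
    have : ψ x ∈ (stallings p G (k + 2)).map ψ := ⟨x, hx, rfl⟩
    have := stallings_map_le p ψ (k + 2) this
    rwa [stallings_quotient_eq_bot, Subgroup.mem_bot] at this
  set Φ' : (G ⧸ stallings p G (k + 2)) →* (G ⧸ stallings p G (k + 2)) :=
    QuotientGroup.lift (stallings p G (k + 2)) ψ hker with hΦ'def
  have hΦ'mk : ∀ g : G, Φ' (QuotientGroup.mk g) = ψ g := fun g => rfl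
  have hπΦ' : ∀ q, π (Φ' q) = φ (π q) := by
    intro q
    obtain ⟨g, rfl⟩ := QuotientGroup.mk_surjective q
    rw [hΦ'mk, hcomm, hπmk]
  -- membership in stallings (k+1) from equal projections
  have hmem : ∀ a b : G ⧸ stallings p G (k + 2), π a = π b →
      a⁻¹ * b ∈ stallings p (G ⧸ stallings p G (k + 2)) (k + 1) := by
    intro a b hab
    obtain ⟨g, rfl⟩ := QuotientGroup.mk_surjective a
    obtain ⟨h, rfl⟩ := QuotientGroup.mk_surjective b
    rw [hπmk, hπmk] at hab
    rw [QuotientGroup.eq] at hab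
    rw [← stallings_map_surj p (QuotientGroup.mk'_surjective (stallings p G (k + 2))) (k + 1)]
    exact ⟨g⁻¹ * h, hab, by simp⟩
  -- decomposition: every element is (Φ' q') * t with t in stallings (k+1)
  have hdecomp : ∀ q : G ⧸ stallings p G (k + 2), ∃ q' t,
      t ∈ stallings p (G ⧸ stallings p G (k + 2)) (k + 1) ∧ q = Φ' q' * t := by
    intro q
    obtain ⟨q1, hq1⟩ := hπsurj (φ.symm (π q))
    refine ⟨q1, (Φ' q1)⁻¹ * q, hmem _ _ ?_, by group⟩
    rw [hπΦ', hq1, MulEquiv.apply_symm_apply]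
  -- the range of Φ' contains stallings 2
  have hS2 : stallings p (G ⧸ stallings p G (k + 2)) 2 ≤ Φ'.range := by
    have h2 : stallings p (G ⧸ stallings p G (k + 2)) 2 = Subgroup.closure
        {x | (∃ g, ∃ y ∈ stallings p (G ⧸ stallings p G (k + 2)) 1, x = ⁅g, y⁆) ∨
          ∃ y ∈ stallings p (G ⧸ stallings p G (k + 2)) 1, x = y ^ p} := rfl
    rw [h2, Subgroup.closure_le]
    rintro x (⟨a, y, _, rfl⟩ | ⟨y, _, rfl⟩)
    · obtain ⟨qa, ta, hta, rfl⟩ := hdecomp a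
      obtain ⟨qy, ty, hty, rfl⟩ := hdecomp y
      have : ⁅Φ' qa * ta, Φ' qy * ty⁆ = ⁅Φ' qa, Φ' qy⁆ :=
        central_commutator_eq (stallings_central p G k hta) (stallings_central p G k hty) _ _
      rw [this, ← map_commutatorElement]
      exact ⟨⁅qa, qy⁆, rfl⟩
    · obtain ⟨qy, ty, hty, rfl⟩ := hdecomp y
      have hc : Commute (Φ' qy) ty := (stallings_central p G k hty (Φ' qy)).symm
      rw [hc.mul_pow, stallings_pow_eq_one p G k hty, mul_one, ← map_pow]
      exact ⟨qy ^ p, rfl⟩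
  -- Φ' is surjective
  have hsurj : Function.Surjective Φ' := by
    intro q
    obtain ⟨q', t, ht, rfl⟩ := hdecomp q
    have ht2 : t ∈ stallings p (G ⧸ stallings p G (k + 2)) 2 :=
      stallings_antitone p _ (by omega : 2 ≤ k + 1) ht
    obtain ⟨r, hr⟩ := hS2 ht2
    exact ⟨q' * r, by rw [map_mul, hr]⟩
  haveI : Finite (G ⧸ stallings p G (k + 2)) :=
    stallings_quotient_finite p hp.ne_zero G (k + 2)
  have hinj : Function.Injective Φ' := Finite.injective_iff_surjective.mpr hsurj
  refine ⟨MulEquiv.ofBijective Φ' ⟨hinj, hsurj⟩, ?_⟩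
  intro x
  exact hπΦ' x
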